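/- Let Z₁, Z₂ be jointly standard normal with correlation ρ ∈ [0,1], and let U_i = min{0, Z_i}. Then 0 ≤ Cov(U₁, U₂) ≤ (1 − 2/π)·ρ. -/

import Mathlib

open MeasureTheory ProbabilityTheory Real Set Filter
open scoped ENNReal NNReal

namespace Stmt16Aux

lemma pdf_eq (x : ℝ) : gaussianPDFReal 0 1 x = (Real.sqrt (2 * π))⁻¹ * Real.exp (-x ^ 2 / 2) := by
  simp [gaussianPDFReal]

lemma prod_density :
    ((gaussianReal 0 1).prod (gaussianReal 0 1)) =
      (volume : Measure (ℝ × ℝ)).withDensity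
        (fun p => gaussianPDF 0 1 p.1 * gaussianPDF 0 1 p.2) := by
  refine Measure.prod_eq fun s t hs ht => ?_
  rw [withDensity_apply _ (hs.prod ht), Measure.volume_eq_prod, ← Measure.prod_restrict,
    lintegral_prod_mul ((measurable_gaussianPDF 0 1).aemeasurable)
      ((measurable_gaussianPDF 0 1).aemeasurable),
    gaussianReal_apply 0 one_ne_zero s, gaussianReal_apply 0 one_ne_zero t]

lemma integral_prodG (f : ℝ × ℝ → ℝ) :
    ∫ p, f p ∂((gaussianReal 0 1).prod (gaussianReal 0 1)) =
      ∫ p : ℝ × ℝ, (gaussianPDFReal 0 1 p.1 * gaussianPDFReal 0 1 p.2) * f p := by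
  rw [prod_density]
  have hd : (fun p : ℝ × ℝ => gaussianPDF 0 1 p.1 * gaussianPDF 0 1 p.2) =
      fun p : ℝ × ℝ => ((((gaussianPDFReal 0 1 p.1).toNNReal * (gaussianPDFReal 0 1 p.2).toNNReal : ℝ≥0)) : ℝ≥0∞) := by
    ext p
    simp [gaussianPDF, ENNReal.ofReal, ENNReal.coe_mul]
  have hm : Measurable fun p : ℝ × ℝ =>
      (gaussianPDFReal 0 1 p.1).toNNReal * (gaussianPDFReal 0 1 p.2).toNNReal :=
    (((measurable_gaussianPDFReal 0 1).comp measurable_fst).real_toNNReal).mul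
      (((measurable_gaussianPDFReal 0 1).comp measurable_snd).real_toNNReal)
  rw [hd, integral_withDensity_eq_integral_smul hm]
  congr 1
  ext p
  rw [NNReal.smul_def, NNReal.coe_mul,
    Real.coe_toNNReal _ (gaussianPDFReal_nonneg _ _ _),
    Real.coe_toNNReal _ (gaussianPDFReal_nonneg _ _ _)]
  rw [smul_eq_mul]

lemma polar_step (f : ℝ × ℝ → ℝ) :
    ∫ p : ℝ × ℝ, (gaussianPDFReal 0 1 p.1 * gaussianPDFReal 0 1 p.2) * f p =
      ∫ p in Ioi (0:ℝ) ×ˢ Ioo (-π) π,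
        ((2 * π)⁻¹ * (p.1 * Real.exp (-p.1 ^ 2 / 2))) *
          f (p.1 * Real.cos p.2, p.1 * Real.sin p.2) := by
  rw [← integral_comp_polarCoord_symm
    (fun p => (gaussianPDFReal 0 1 p.1 * gaussianPDFReal 0 1 p.2) * f p), polarCoord_target]
  refine setIntegral_congr_fun (measurableSet_Ioi.prod measurableSet_Ioo) fun p _ => ?_
  rw [polarCoord_symm_apply, pdf_eq, pdf_eq, smul_eq_mul]
  have key : ((Real.sqrt (2 * π))⁻¹ * Real.exp (-(p.1 * Real.cos p.2) ^ 2 / 2)) *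
      ((Real.sqrt (2 * π))⁻¹ * Real.exp (-(p.1 * Real.sin p.2) ^ 2 / 2)) =
      (2 * π)⁻¹ * Real.exp (-p.1 ^ 2 / 2) := by
    have h2 : Real.exp (-(p.1 * Real.cos p.2) ^ 2 / 2) * Real.exp (-(p.1 * Real.sin p.2) ^ 2 / 2)
        = Real.exp (-p.1 ^ 2 / 2) := by
      rw [← Real.exp_add]
      congr 1
      linear_combination (-(p.1 ^ 2) / 2) * Real.sin_sq_add_cos_sq p.2
    calc ((Real.sqrt (2 * π))⁻¹ * Real.exp (-(p.1 * Real.cos p.2) ^ 2 / 2)) *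
        ((Real.sqrt (2 * π))⁻¹ * Real.exp (-(p.1 * Real.sin p.2) ^ 2 / 2))
        = ((Real.sqrt (2 * π))⁻¹ * (Real.sqrt (2 * π))⁻¹) *
          (Real.exp (-(p.1 * Real.cos p.2) ^ 2 / 2) * Real.exp (-(p.1 * Real.sin p.2) ^ 2 / 2)) := by
          ring
      _ = (2 * π)⁻¹ * Real.exp (-p.1 ^ 2 / 2) := by
          rw [h2, ← mul_inv, Real.mul_self_sqrt (by positivity : (0:ℝ) ≤ 2 * π)]
  rw [key]
  ring

lemma tendsto_aux0 : Tendsto (fun r : ℝ => Real.exp (-r ^ 2 / 2)) atTop (nhds 0) := by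
  have h1 : Tendsto (fun r : ℝ => r ^ 2 / 2) atTop atTop :=
    (tendsto_pow_atTop two_ne_zero).atTop_div_const two_pos
  have := Real.tendsto_exp_atBot.comp (tendsto_neg_atTop_atBot.comp h1)
  convert this using 2 with r
  simp [Function.comp, neg_div]

lemma tendsto_aux1 : Tendsto (fun r : ℝ => r ^ 2 * Real.exp (-r ^ 2 / 2)) atTop (nhds 0) := by
  have h1 : Tendsto (fun r : ℝ => r ^ 2 / 2) atTop atTop :=
    (tendsto_pow_atTop two_ne_zero).atTop_div_const two_pos
  have h2 : Tendsto (fun u : ℝ => 2 * (u ^ 1 * Real.exp (-u))) atTop (nhds (2 * 0)) :=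
    (Real.tendsto_pow_mul_exp_neg_atTop_nhds_zero 1).const_mul 2
  simp only [mul_zero] at h2
  have h3 := h2.comp h1
  convert h3 using 2 with r
  show r ^ 2 * Real.exp (-r ^ 2 / 2) = 2 * ((r ^ 2 / 2) ^ 1 * Real.exp (-(r ^ 2 / 2)))
  rw [pow_one, neg_div]
  ring

lemma tendsto_aux_r : Tendsto (fun r : ℝ => r * Real.exp (-r ^ 2 / 2)) atTop (nhds 0) := by
  refine squeeze_zero_norm' ?_ tendsto_aux1
  filter_upwards [eventually_ge_atTop (1:ℝ)] with r hr
  rw [Real.norm_eq_abs, abs_of_nonneg (by positivity)]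
  exact mul_le_mul_of_nonneg_right (by nlinarith) (Real.exp_pos _).le

lemma tendsto_aux3 : Tendsto (fun r : ℝ => -(r ^ 2 + 2) * Real.exp (-r ^ 2 / 2)) atTop (nhds 0) := by
  have := (tendsto_aux1.neg).sub (tendsto_aux0.const_mul 2)
  simp only [neg_zero, mul_zero, sub_zero, zero_sub] at this
  convert this using 2 with r
  ring

lemma intOn_R3 : IntegrableOn (fun r : ℝ => r ^ 3 * Real.exp (-r ^ 2 / 2)) (Ioi 0) := by
  have h := integrableOn_rpow_mul_exp_neg_mul_sq (by norm_num : (0:ℝ) < 1/2)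
    (by norm_num : (-1:ℝ) < 3)
  refine h.congr_fun (fun x _ => ?_) measurableSet_Ioi
  dsimp only
  rw [show ((3:ℝ)) = ((3:ℕ):ℝ) by norm_num, Real.rpow_natCast,
    show -(1/2) * x ^ 2 = -x ^ 2 / 2 by ring]

lemma intOn_R2 : IntegrableOn (fun r : ℝ => r ^ 2 * Real.exp (-r ^ 2 / 2)) (Ioi 0) := by
  have h := integrableOn_rpow_mul_exp_neg_mul_sq (by norm_num : (0:ℝ) < 1/2)
    (by norm_num : (-1:ℝ) < 2)
  refine h.congr_fun (fun x _ => ?_) measurableSet_Ioi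
  dsimp only
  rw [Real.rpow_two, show -(1/2) * x ^ 2 = -x ^ 2 / 2 by ring]

lemma intOn_R0 : IntegrableOn (fun r : ℝ => Real.exp (-r ^ 2 / 2)) (Ioi 0) := by
  have h := (integrable_exp_neg_mul_sq (by norm_num : (0:ℝ) < 1/2)).integrableOn
    (s := Ioi 0)
  refine h.congr_fun (fun x _ => ?_) measurableSet_Ioi
  dsimp only
  rw [show -(1/2) * x ^ 2 = -x ^ 2 / 2 by ring]

lemma intOn_R1 : IntegrableOn (fun r : ℝ => r * Real.exp (-r ^ 2 / 2)) (Ioi 0) := by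
  have h := (integrable_mul_exp_neg_mul_sq (by norm_num : (0:ℝ) < 1/2)).integrableOn
    (s := Ioi 0)
  refine h.congr_fun (fun x _ => ?_) measurableSet_Ioi
  dsimp only
  rw [show -(1/2) * x ^ 2 = -x ^ 2 / 2 by ring]

lemma deriv_exp_sq (x : ℝ) : HasDerivAt (fun r : ℝ => Real.exp (-r ^ 2 / 2))
    (Real.exp (-x ^ 2 / 2) * -x) x := by
  have h1 : HasDerivAt (fun r : ℝ => -r ^ 2 / 2) (-x) x := by
    have := ((hasDerivAt_pow 2 x).neg).div_const 2
    refine this.congr_deriv (Eq.symm ?_)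
    simp
    ring
  exact h1.exp

lemma R3_val : ∫ r in Ioi (0:ℝ), r ^ 3 * Real.exp (-r ^ 2 / 2) = 2 := by
  have hderiv : ∀ x ∈ Ici (0:ℝ), HasDerivAt (fun r : ℝ => -(r ^ 2 + 2) * Real.exp (-r ^ 2 / 2))
      (x ^ 3 * Real.exp (-x ^ 2 / 2)) x := by
    intro x _
    have h3 : HasDerivAt (fun r : ℝ => -(r ^ 2 + 2)) (-(2 * x)) x := by
      have := ((hasDerivAt_pow 2 x).add_const 2).neg
      refine this.congr_deriv (Eq.symm ?_)
      simp
    have := h3.mul (deriv_exp_sq x)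
    refine this.congr_deriv (Eq.symm ?_)
    ring
  have h := integral_Ioi_of_hasDerivAt_of_tendsto' hderiv intOn_R3 tendsto_aux3
  rw [h]
  norm_num

lemma R0_val : ∫ r in Ioi (0:ℝ), Real.exp (-r ^ 2 / 2) = Real.sqrt (2 * π) / 2 := by
  have h := integral_gaussian_Ioi (1/2)
  rw [show π / (1/2) = 2 * π by ring] at h
  rw [← h]
  refine setIntegral_congr_fun measurableSet_Ioi fun x _ => ?_
  rw [show -(1/2) * x ^ 2 = -x ^ 2 / 2 by ring]

lemma R2_val : ∫ r in Ioi (0:ℝ), r ^ 2 * Real.exp (-r ^ 2 / 2) = Real.sqrt (2 * π) / 2 := by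
  have hderiv : ∀ x ∈ Ici (0:ℝ), HasDerivAt (fun r : ℝ => -r * Real.exp (-r ^ 2 / 2))
      ((x ^ 2 - 1) * Real.exp (-x ^ 2 / 2)) x := by
    intro x _
    have := ((hasDerivAt_id x).neg).mul (deriv_exp_sq x)
    refine this.congr_deriv (Eq.symm ?_)
    simp only [Pi.neg_apply, id_eq]
    ring
  have hintsub : IntegrableOn (fun r : ℝ => (r ^ 2 - 1) * Real.exp (-r ^ 2 / 2)) (Ioi 0) := by
    refine IntegrableOn.congr_fun (intOn_R2.sub intOn_R0) (fun x _ => ?_) measurableSet_Ioi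
    simp only [Pi.sub_apply]
    ring
  have htend : Tendsto (fun r : ℝ => -r * Real.exp (-r ^ 2 / 2)) atTop (nhds 0) := by
    have := tendsto_aux_r.neg
    simp only [neg_zero] at this
    convert this using 2 with r
    ring
  have h := integral_Ioi_of_hasDerivAt_of_tendsto' hderiv hintsub htend
  have hsplit : ∫ r in Ioi (0:ℝ), (r ^ 2 - 1) * Real.exp (-r ^ 2 / 2) =
      (∫ r in Ioi (0:ℝ), r ^ 2 * Real.exp (-r ^ 2 / 2)) -
        ∫ r in Ioi (0:ℝ), Real.exp (-r ^ 2 / 2) := by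
    rw [← integral_sub intOn_R2 intOn_R0]
    refine setIntegral_congr_fun measurableSet_Ioi fun x _ => ?_
    ring
  rw [hsplit, R0_val] at h
  norm_num at h
  rw [Real.sqrt_mul (by norm_num : (0:ℝ) ≤ 2)]
  linarith

lemma trig_id (θ α : ℝ) :
    Real.sin α / 2 + Real.sin (2 * θ + α) / 2 = Real.cos θ * Real.sin (θ + α) := by
  have h1 : Real.sin (2 * θ + α) =
      Real.sin θ * Real.cos (θ + α) + Real.cos θ * Real.sin (θ + α) := by
    rw [show 2 * θ + α = θ + (θ + α) by ring, Real.sin_add]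
  have h2 := Real.sin_sub (θ + α) θ
  rw [show θ + α - θ = α by ring] at h2
  rw [h1, h2]; ring

lemma hasDerivAt_F (α θ : ℝ) :
    HasDerivAt (fun θ : ℝ => Real.sin α * θ / 2 - Real.cos (2 * θ + α) / 4)
      (Real.cos θ * Real.sin (θ + α)) θ := by
  have h1 : HasDerivAt (fun θ : ℝ => Real.sin α * θ / 2) (Real.sin α / 2) θ := by
    have := ((hasDerivAt_id θ).const_mul (Real.sin α)).div_const 2
    simpa using this
  have h2 : HasDerivAt (fun θ : ℝ => 2 * θ + α) 2 θ := by
    simpa using ((hasDerivAt_id θ).const_mul 2).add_const α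
  have h4 := h1.sub ((h2.cos).div_const 4)
  refine h4.congr_deriv (Eq.symm ?_)
  rw [← trig_id θ α]; ring

lemma cont_min_sin (α : ℝ) : Continuous fun u : ℝ => min 0 (Real.sin (u + α)) :=
  continuous_const.min (Real.continuous_sin.comp (continuous_id.add continuous_const))

lemma theta2 (α : ℝ) : ∫ θ in (-π)..π, min 0 (Real.sin (θ + α)) = -2 := by
  have hm : Continuous fun u : ℝ => min 0 (Real.sin u) :=
    continuous_const.min Real.continuous_sin
  have hcomp : (∫ θ in (-π)..π, min 0 (Real.sin (θ + α))) =
      ∫ u in (-π + α)..(π + α), min 0 (Real.sin u) :=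
    intervalIntegral.integral_comp_add_right (fun u => min 0 (Real.sin u)) α
  have hper : Function.Periodic (fun u : ℝ => min 0 (Real.sin u)) (2 * π) := fun x => by
    simp [Real.sin_add_two_pi]
  have hshift := hper.intervalIntegral_add_eq (-π + α) (-π)
  rw [hcomp, show π + α = -π + α + 2 * π by ring, hshift, show -π + 2 * π = π by ring]
  have hsplit := intervalIntegral.integral_add_adjacent_intervals (μ := volume) (a := -π) (b := 0) (c := π)
    (hm.intervalIntegrable _ _) (hm.intervalIntegrable _ _)
  rw [← hsplit]
  have e1 : ∫ u in (-π)..0, min 0 (Real.sin u) = ∫ u in (-π)..0, Real.sin u := by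
    refine intervalIntegral.integral_congr fun u hu => ?_
    rw [uIcc_of_le (by linarith [Real.pi_pos])] at hu
    exact min_eq_right (Real.sin_nonpos_of_nonpos_of_neg_pi_le hu.2 hu.1)
  have e2 : ∫ u in (0:ℝ)..π, min 0 (Real.sin u) = 0 := by
    have h0 : ∀ u ∈ uIcc (0:ℝ) π, min 0 (Real.sin u) = (fun _ : ℝ => (0:ℝ)) u := by
      intro u hu
      rw [uIcc_of_le Real.pi_pos.le] at hu
      exact min_eq_left (Real.sin_nonneg_of_nonneg_of_le_pi hu.1 hu.2)
    rw [intervalIntegral.integral_congr h0, intervalIntegral.integral_zero]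
  rw [e1, e2, integral_sin]
  simp [Real.cos_pi]
  norm_num

lemma theta3 {α : ℝ} (hα0 : 0 ≤ α) (hα2 : α ≤ π / 2) :
    ∫ θ in (-π)..π, min 0 (Real.cos θ) * min 0 (Real.sin (θ + α)) =
      π * Real.sin α / 4 + Real.cos α / 2 + α * Real.sin α / 2 := by
  have hpi := Real.pi_pos
  have hm : Continuous fun θ : ℝ => min 0 (Real.cos θ) * min 0 (Real.sin (θ + α)) :=
    (continuous_const.min Real.continuous_cos).mul (cont_min_sin α)
  have hcs : Continuous fun θ : ℝ => Real.cos θ * Real.sin (θ + α) :=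
    Real.continuous_cos.mul (Real.continuous_sin.comp (continuous_id.add continuous_const))
  have hs1 := intervalIntegral.integral_add_adjacent_intervals (μ := volume) (a := -π) (b := -(π/2)) (c := π)
    (hm.intervalIntegrable _ _) (hm.intervalIntegrable _ _)
  have hs2 := intervalIntegral.integral_add_adjacent_intervals (μ := volume) (a := -(π/2)) (b := π - α)
    (c := π) (hm.intervalIntegrable _ _) (hm.intervalIntegrable _ _)
  rw [← hs1, ← hs2]
  have e1 : ∫ θ in (-π)..(-(π/2)), min 0 (Real.cos θ) * min 0 (Real.sin (θ + α)) =
      ∫ θ in (-π)..(-(π/2)), Real.cos θ * Real.sin (θ + α) := by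
    refine intervalIntegral.integral_congr fun θ hθ => ?_
    rw [uIcc_of_le (by linarith)] at hθ
    have hc : Real.cos θ ≤ 0 := by
      rw [← Real.cos_neg]
      exact Real.cos_nonpos_of_pi_div_two_le_of_le (by linarith [hθ.2]) (by linarith [hθ.1])
    have hs : Real.sin (θ + α) ≤ 0 :=
      Real.sin_nonpos_of_nonpos_of_neg_pi_le (by linarith [hθ.2]) (by linarith [hθ.1])
    rw [min_eq_right hc, min_eq_right hs]
  have e2 : ∫ θ in (-(π/2))..(π - α), min 0 (Real.cos θ) * min 0 (Real.sin (θ + α)) = 0 := by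
    have h0 : ∀ θ ∈ uIcc (-(π/2)) (π - α),
        min 0 (Real.cos θ) * min 0 (Real.sin (θ + α)) = (fun _ : ℝ => (0:ℝ)) θ := by
      intro θ hθ
      rw [uIcc_of_le (by linarith)] at hθ
      rcases le_or_gt θ (π/2) with h | h
      · rw [min_eq_left (Real.cos_nonneg_of_neg_pi_div_two_le_of_le (by linarith [hθ.1]) h),
          zero_mul]
      · rw [min_eq_left (Real.sin_nonneg_of_nonneg_of_le_pi (by linarith) (by linarith [hθ.2])),
          mul_zero]
    rw [intervalIntegral.integral_congr h0, intervalIntegral.integral_zero]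
  have e3 : ∫ θ in (π - α)..π, min 0 (Real.cos θ) * min 0 (Real.sin (θ + α)) =
      ∫ θ in (π - α)..π, Real.cos θ * Real.sin (θ + α) := by
    refine intervalIntegral.integral_congr fun θ hθ => ?_
    rw [uIcc_of_le (by linarith)] at hθ
    have hc : Real.cos θ ≤ 0 :=
      Real.cos_nonpos_of_pi_div_two_le_of_le (by linarith [hθ.1]) (by linarith [hθ.2])
    have hs : Real.sin (θ + α) ≤ 0 := by
      have hnn := Real.sin_nonneg_of_nonneg_of_le_pi (show 0 ≤ θ + α - π by linarith [hθ.1])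
        (by linarith [hθ.2])
      have heq := Real.sin_sub_pi (θ + α)
      linarith
    rw [min_eq_right hc, min_eq_right hs]
  have v1 : ∫ θ in (-π)..(-(π/2)), Real.cos θ * Real.sin (θ + α) =
      π * Real.sin α / 4 + Real.cos α / 2 := by
    rw [intervalIntegral.integral_eq_sub_of_hasDerivAt (fun θ _ => hasDerivAt_F α θ)
      (hcs.intervalIntegrable _ _)]
    have c1 : Real.cos (2 * -(π/2) + α) = -Real.cos α := by
      rw [show 2 * -(π/2) + α = α - π by ring, Real.cos_sub_pi]
    have c2 : Real.cos (2 * -π + α) = Real.cos α := by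
      rw [show 2 * -π + α = α - 2 * π by ring, Real.cos_sub_two_pi]
    rw [c1, c2]; ring
  have v3 : ∫ θ in (π - α)..π, Real.cos θ * Real.sin (θ + α) = α * Real.sin α / 2 := by
    rw [intervalIntegral.integral_eq_sub_of_hasDerivAt (fun θ _ => hasDerivAt_F α θ)
      (hcs.intervalIntegrable _ _)]
    have c1 : Real.cos (2 * π + α) = Real.cos α := by
      rw [show 2 * π + α = α + 2 * π by ring, Real.cos_add_two_pi]
    have c2 : Real.cos (2 * (π - α) + α) = Real.cos α := by
      rw [show 2 * (π - α) + α = 2 * π - α by ring, Real.cos_two_pi_sub]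
    rw [c1, c2]; ring
  rw [e1, v1, e2, e3, v3]; ring

lemma R1_val : ∫ r in Ioi (0:ℝ), r * Real.exp (-r ^ 2 / 2) = 1 := by
  have hderiv : ∀ x ∈ Ici (0:ℝ), HasDerivAt (fun r : ℝ => -Real.exp (-r ^ 2 / 2))
      (x * Real.exp (-x ^ 2 / 2)) x := by
    intro x _
    have := (deriv_exp_sq x).neg
    refine this.congr_deriv (Eq.symm ?_)
    ring
  have htend : Tendsto (fun r : ℝ => -Real.exp (-r ^ 2 / 2)) atTop (nhds 0) := by
    have := tendsto_aux0.neg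
    simpa using this
  have h := integral_Ioi_of_hasDerivAt_of_tendsto' hderiv intOn_R1 htend
  rw [h]
  norm_num

lemma integral_G (f : ℝ → ℝ) :
    ∫ x, f x ∂(gaussianReal 0 1) = ∫ x, gaussianPDFReal 0 1 x * f x := by
  rw [gaussianReal_of_var_ne_zero 0 one_ne_zero]
  have hd : gaussianPDF 0 1 = fun x => (((gaussianPDFReal 0 1 x).toNNReal : ℝ≥0) : ℝ≥0∞) := by
    ext x
    simp [gaussianPDF, ENNReal.ofReal]
  rw [hd, integral_withDensity_eq_integral_smul (measurable_gaussianPDFReal 0 1).real_toNNReal]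
  congr 1
  ext x
  rw [NNReal.smul_def, Real.coe_toNNReal _ (gaussianPDFReal_nonneg _ _ _), smul_eq_mul]

lemma L1_val : ∫ x, min 0 x ∂(gaussianReal 0 1) = -(Real.sqrt (2 * π))⁻¹ := by
  rw [integral_G]
  have hIio : IntegrableOn (fun x : ℝ => gaussianPDFReal 0 1 x * min 0 x) (Iio 0) := by
    have hint : Integrable (fun x : ℝ => gaussianPDFReal 0 1 x * x) := by
      have h := (integrable_mul_exp_neg_mul_sq (by norm_num : (0:ℝ) < 1/2)).const_mul
        ((Real.sqrt (2 * π))⁻¹)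
      refine h.congr (ae_of_all _ fun x => ?_)
      simp only [pdf_eq]
      rw [show -(1/2) * x ^ 2 = -x ^ 2 / 2 by ring]
      ring
    refine IntegrableOn.congr_fun hint.integrableOn (fun x hx => ?_) measurableSet_Iio
    rw [min_eq_right (le_of_lt hx)]
  have hIci : IntegrableOn (fun x : ℝ => gaussianPDFReal 0 1 x * min 0 x) (Ici 0) := by
    refine IntegrableOn.congr_fun (integrableOn_zero) (fun x hx => ?_) measurableSet_Ici
    rw [min_eq_left hx, mul_zero]
  rw [← intervalIntegral.integral_Iio_add_Ici hIio hIci]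
  have e2 : ∫ x in Ici (0:ℝ), gaussianPDFReal 0 1 x * min 0 x = 0 := by
    have h0 : ∫ x in Ici (0:ℝ), gaussianPDFReal 0 1 x * min 0 x =
        ∫ _ in Ici (0:ℝ), (0:ℝ) :=
      setIntegral_congr_fun measurableSet_Ici fun x hx => by rw [min_eq_left hx, mul_zero]
    rw [h0, integral_zero]
  have e1 : ∫ x in Iio (0:ℝ), gaussianPDFReal 0 1 x * min 0 x =
      ∫ x in Iio (0:ℝ), gaussianPDFReal 0 1 x * x := by
    refine setIntegral_congr_fun measurableSet_Iio fun x hx => ?_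
    rw [min_eq_right (le_of_lt hx)]
  have e3 : ∫ x in Iio (0:ℝ), gaussianPDFReal 0 1 x * x = -(Real.sqrt (2 * π))⁻¹ := by
    have hneg := integral_comp_neg_Ioi (c := 0) (f := fun x => gaussianPDFReal 0 1 x * x)
    rw [neg_zero, integral_Iic_eq_integral_Iio] at hneg
    rw [← hneg]
    have e4 : ∫ x in Ioi (0:ℝ), gaussianPDFReal 0 1 (-x) * (-x) =
        ∫ x in Ioi (0:ℝ), -((Real.sqrt (2 * π))⁻¹ * (x * Real.exp (-x ^ 2 / 2))) := by
      refine setIntegral_congr_fun measurableSet_Ioi fun x _ => ?_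
      rw [pdf_eq, show -(-x) ^ 2 = -x ^ 2 by ring]
      ring
    rw [e4, integral_neg, integral_const_mul, R1_val, mul_one]
  rw [e1, e2, e3, add_zero]

lemma L3_val : ∫ p, min 0 p.1 ∂((gaussianReal 0 1).prod (gaussianReal 0 1)) =
    -(Real.sqrt (2 * π))⁻¹ := by
  have h : ∫ x, min 0 x ∂(Measure.map Prod.fst ((gaussianReal 0 1).prod (gaussianReal 0 1))) =
      ∫ p : ℝ × ℝ, min 0 p.1 ∂((gaussianReal 0 1).prod (gaussianReal 0 1)) :=
    integral_map measurable_fst.aemeasurable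
      ((continuous_const.min continuous_id).aestronglyMeasurable)
  rw [Measure.map_fst_prod] at h
  simp only [measure_univ, one_smul] at h
  rw [← h, L1_val]

lemma ioo_to_interval {g : ℝ → ℝ} :
    ∫ θ in Ioo (-π) π, g θ = ∫ θ in (-π)..π, g θ := by
  rw [intervalIntegral.integral_of_le (by linarith [Real.pi_pos]),
    integral_Ioc_eq_integral_Ioo]

lemma L2_val {ρ : ℝ} (hρ0 : 0 ≤ ρ) (hρ1 : ρ ≤ 1) :
    ∫ p, min 0 (ρ * p.1 + Real.sqrt (1 - ρ ^ 2) * p.2)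
        ∂((gaussianReal 0 1).prod (gaussianReal 0 1)) = -(Real.sqrt (2 * π))⁻¹ := by
  have hpi := Real.pi_pos
  set α := Real.arcsin ρ with hα
  have hsin : Real.sin α = ρ := Real.sin_arcsin (by linarith) hρ1
  have hcos : Real.cos α = Real.sqrt (1 - ρ ^ 2) := Real.cos_arcsin ρ
  rw [integral_prodG, polar_step (fun q => min 0 (ρ * q.1 + Real.sqrt (1 - ρ ^ 2) * q.2))]
  have key : EqOn
      (fun p : ℝ × ℝ => ((2 * π)⁻¹ * (p.1 * Real.exp (-p.1 ^ 2 / 2))) *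
        min 0 (ρ * (p.1 * Real.cos p.2) + Real.sqrt (1 - ρ ^ 2) * (p.1 * Real.sin p.2)))
      (fun p : ℝ × ℝ => ((2 * π)⁻¹ * (p.1 ^ 2 * Real.exp (-p.1 ^ 2 / 2))) *
        min 0 (Real.sin (p.2 + α)))
      (Ioi (0:ℝ) ×ˢ Ioo (-π) π) := by
    rintro ⟨r, θ⟩ ⟨hr, _⟩
    simp only
    have harg : ρ * (r * Real.cos θ) + Real.sqrt (1 - ρ ^ 2) * (r * Real.sin θ) =
        r * Real.sin (θ + α) := by
      rw [Real.sin_add, hsin, hcos]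
      ring
    have h2 : min 0 (r * Real.sin (θ + α)) = r * min 0 (Real.sin (θ + α)) := by
      rw [mul_min_of_nonneg _ _ (le_of_lt (α := ℝ) hr), mul_zero]
    rw [harg, h2]
    ring
  rw [setIntegral_congr_fun (measurableSet_Ioi.prod measurableSet_Ioo) key,
    Measure.volume_eq_prod, ← Measure.prod_restrict,
    integral_prod_mul (fun r : ℝ => (2 * π)⁻¹ * (r ^ 2 * Real.exp (-r ^ 2 / 2)))
      (fun θ : ℝ => min 0 (Real.sin (θ + α))),
    integral_const_mul, R2_val, ioo_to_interval, theta2]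
  have h2π : Real.sqrt (2 * π) * Real.sqrt (2 * π) = 2 * π :=
    Real.mul_self_sqrt (by positivity)
  have hs : Real.sqrt (2 * π) ≠ 0 := ne_of_gt (Real.sqrt_pos.2 (by positivity))
  rw [← h2π]
  field_simp
  rw [Real.sqrt_sq (by positivity)]

lemma L4_val {ρ : ℝ} (hρ0 : 0 ≤ ρ) (hρ1 : ρ ≤ 1) :
    ∫ p, min 0 p.1 * min 0 (ρ * p.1 + Real.sqrt (1 - ρ ^ 2) * p.2)
        ∂((gaussianReal 0 1).prod (gaussianReal 0 1)) =
      ρ / 4 + (Real.sqrt (1 - ρ ^ 2) + Real.arcsin ρ * ρ) / (2 * π) := by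
  have hpi := Real.pi_pos
  set α := Real.arcsin ρ with hα
  have hsin : Real.sin α = ρ := Real.sin_arcsin (by linarith) hρ1
  have hcos : Real.cos α = Real.sqrt (1 - ρ ^ 2) := Real.cos_arcsin ρ
  have hα0 : 0 ≤ α := Real.arcsin_nonneg.2 hρ0
  have hα2 : α ≤ π / 2 := Real.arcsin_le_pi_div_two ρ
  rw [integral_prodG,
    polar_step (fun q => min 0 q.1 * min 0 (ρ * q.1 + Real.sqrt (1 - ρ ^ 2) * q.2))]
  have key : EqOn
      (fun p : ℝ × ℝ => ((2 * π)⁻¹ * (p.1 * Real.exp (-p.1 ^ 2 / 2))) *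
        (min 0 (p.1 * Real.cos p.2) *
          min 0 (ρ * (p.1 * Real.cos p.2) + Real.sqrt (1 - ρ ^ 2) * (p.1 * Real.sin p.2))))
      (fun p : ℝ × ℝ => ((2 * π)⁻¹ * (p.1 ^ 3 * Real.exp (-p.1 ^ 2 / 2))) *
        (min 0 (Real.cos p.2) * min 0 (Real.sin (p.2 + α))))
      (Ioi (0:ℝ) ×ˢ Ioo (-π) π) := by
    rintro ⟨r, θ⟩ ⟨hr, _⟩
    simp only
    have h1 : min 0 (r * Real.cos θ) = r * min 0 (Real.cos θ) := by
      rw [mul_min_of_nonneg _ _ (le_of_lt (α := ℝ) hr), mul_zero]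
    have harg : ρ * (r * Real.cos θ) + Real.sqrt (1 - ρ ^ 2) * (r * Real.sin θ) =
        r * Real.sin (θ + α) := by
      rw [Real.sin_add, hsin, hcos]
      ring
    have h2 : min 0 (r * Real.sin (θ + α)) = r * min 0 (Real.sin (θ + α)) := by
      rw [mul_min_of_nonneg _ _ (le_of_lt (α := ℝ) hr), mul_zero]
    rw [h1, harg, h2]
    ring
  rw [setIntegral_congr_fun (measurableSet_Ioi.prod measurableSet_Ioo) key,
    Measure.volume_eq_prod, ← Measure.prod_restrict,
    integral_prod_mul (fun r : ℝ => (2 * π)⁻¹ * (r ^ 3 * Real.exp (-r ^ 2 / 2)))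
      (fun θ : ℝ => min 0 (Real.cos θ) * min 0 (Real.sin (θ + α))),
    integral_const_mul, R3_val, ioo_to_interval, theta3 hα0 hα2]
  rw [← hcos, ← hsin]
  field_simp
  ring

lemma key_ineq {ρ : ℝ} (hρ0 : 0 ≤ ρ) (hρ1 : ρ ≤ 1) :
    0 ≤ ρ / 4 + (Real.sqrt (1 - ρ ^ 2) + Real.arcsin ρ * ρ - 1) / (2 * π) ∧
      ρ / 4 + (Real.sqrt (1 - ρ ^ 2) + Real.arcsin ρ * ρ - 1) / (2 * π) ≤ (1 - 2 / π) * ρ := by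
  have hpi := Real.pi_pos
  have hpi3 := Real.pi_gt_three
  set α := Real.arcsin ρ with hαdef
  have hsin : Real.sin α = ρ := Real.sin_arcsin (by linarith) hρ1
  have hcos : Real.cos α = Real.sqrt (1 - ρ ^ 2) := Real.cos_arcsin ρ
  have hα0 : 0 ≤ α := Real.arcsin_nonneg.2 hρ0
  have hα2 : α ≤ π / 2 := Real.arcsin_le_pi_div_two ρ
  set s := Real.sqrt (1 - ρ ^ 2) with hsdef
  have hs0 : 0 ≤ s := Real.sqrt_nonneg _
  have hs2 : s ^ 2 = 1 - ρ ^ 2 := Real.sq_sqrt (by nlinarith)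
  have hs1 : s ≤ 1 := by nlinarith
  have hρα : ρ ≤ α := by
    have h := Real.sin_le hα0
    rw [hsin] at h
    exact h
  have h2π : (0:ℝ) < 2 * π := by linarith
  have hg0 : 0 ≤ s + α * ρ - 1 := by nlinarith
  constructor
  · have h := div_nonneg hg0 h2π.le
    linarith
  · have hgu : s + α * ρ - 1 ≤ (π / 2 - 1) * ρ := by
      set t := π / 2 - α with htdef
      have ht0 : 0 ≤ t := by simp only [htdef]; linarith
      have hsint : Real.sin t = s := by rw [htdef, Real.sin_pi_div_two_sub, hcos]
      have hcost : Real.cos t = ρ := by rw [htdef, Real.cos_pi_div_two_sub, hsin]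
      have hct1 : Real.cos t ≤ 1 := Real.cos_le_one t
      have hkey : Real.sin t + Real.cos t - 1 ≤ t * Real.cos t := by
        rcases le_or_gt t 1 with h | h
        · have hst := Real.sin_le ht0
          nlinarith [hcost ▸ hρ0]
        · have hst := Real.sin_le_one t
          nlinarith [hcost ▸ hρ0]
      rw [hsint, hcost] at hkey
      rw [htdef] at hkey
      linarith [hkey]
    have key2 : s + α * ρ - 1 ≤ (3 * π / 2 - 4) * ρ := by nlinarith
    have h1 : (s + α * ρ - 1) / (2 * π) ≤ ((3 * π / 2 - 4) * ρ) / (2 * π) :=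
      div_le_div_of_nonneg_right key2 h2π.le
    have h2 : ((3 * π / 2 - 4) * ρ) / (2 * π) = (3 / 4) * ρ - (2 / π) * ρ := by
      field_simp
      ring
    rw [h2] at h1
    have h3 : (1 - 2 / π) * ρ = ρ - (2 / π) * ρ := by ring
    linarith

end Stmt16Aux

/-- Covariance bound for clipped jointly-normal variables:
`0 ≤ Cov(min{0,Z₁}, min{0,Z₂}) ≤ (1 − 2/π)·ρ`. -/
theorem stmt16 {Ω : Type*} [MeasurableSpace Ω] (Pm : Measure Ω) [IsProbabilityMeasure Pm]
    (Z₁ Z₂ : Ω → ℝ) (h₁ : Measurable Z₁) (h₂ : Measurable Z₂)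
    (ρ : ℝ) (hρ0 : 0 ≤ ρ) (hρ1 : ρ ≤ 1)
    (hlaw : Measure.map (fun ω => (Z₁ ω, Z₂ ω)) Pm =
      Measure.map (fun p : ℝ × ℝ => (p.1, ρ * p.1 + Real.sqrt (1 - ρ ^ 2) * p.2))
        ((gaussianReal 0 1).prod (gaussianReal 0 1)))
    (cov : ℝ)
    (hcov : cov = (∫ ω, min 0 (Z₁ ω) * min 0 (Z₂ ω) ∂Pm) -
      (∫ ω, min 0 (Z₁ ω) ∂Pm) * (∫ ω, min 0 (Z₂ ω) ∂Pm)) :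
    0 ≤ cov ∧ cov ≤ (1 - 2 / Real.pi) * ρ := by
  have hpair : AEMeasurable (fun ω => (Z₁ ω, Z₂ ω)) Pm := (h₁.prodMk h₂).aemeasurable
  have hT : Measurable (fun p : ℝ × ℝ => (p.1, ρ * p.1 + Real.sqrt (1 - ρ ^ 2) * p.2)) :=
    measurable_fst.prodMk ((measurable_fst.const_mul ρ).add (measurable_snd.const_mul _))
  have hI12 : ∫ ω, min 0 (Z₁ ω) * min 0 (Z₂ ω) ∂Pm =
      ρ / 4 + (Real.sqrt (1 - ρ ^ 2) + Real.arcsin ρ * ρ) / (2 * Real.pi) := by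
    have hcont : Continuous fun p : ℝ × ℝ => min 0 p.1 * min 0 p.2 :=
      (continuous_const.min continuous_fst).mul (continuous_const.min continuous_snd)
    have hA : ∫ ω, min 0 (Z₁ ω) * min 0 (Z₂ ω) ∂Pm =
        ∫ p : ℝ × ℝ, min 0 p.1 * min 0 p.2 ∂(Measure.map (fun ω => (Z₁ ω, Z₂ ω)) Pm) :=
      (integral_map hpair hcont.aestronglyMeasurable).symm
    rw [hA, hlaw, integral_map hT.aemeasurable hcont.aestronglyMeasurable]
    exact Stmt16Aux.L4_val hρ0 hρ1
  have hI1 : ∫ ω, min 0 (Z₁ ω) ∂Pm = -(Real.sqrt (2 * Real.pi))⁻¹ := by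
    have hcont : Continuous fun p : ℝ × ℝ => min 0 p.1 :=
      continuous_const.min continuous_fst
    have hA : ∫ ω, min 0 (Z₁ ω) ∂Pm =
        ∫ p : ℝ × ℝ, min 0 p.1 ∂(Measure.map (fun ω => (Z₁ ω, Z₂ ω)) Pm) :=
      (integral_map hpair hcont.aestronglyMeasurable).symm
    rw [hA, hlaw, integral_map hT.aemeasurable hcont.aestronglyMeasurable]
    exact Stmt16Aux.L3_val
  have hI2 : ∫ ω, min 0 (Z₂ ω) ∂Pm = -(Real.sqrt (2 * Real.pi))⁻¹ := by
    have hcont : Continuous fun p : ℝ × ℝ => min 0 p.2 :=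
      continuous_const.min continuous_snd
    have hA : ∫ ω, min 0 (Z₂ ω) ∂Pm =
        ∫ p : ℝ × ℝ, min 0 p.2 ∂(Measure.map (fun ω => (Z₁ ω, Z₂ ω)) Pm) :=
      (integral_map hpair hcont.aestronglyMeasurable).symm
    rw [hA, hlaw, integral_map hT.aemeasurable hcont.aestronglyMeasurable]
    exact Stmt16Aux.L2_val hρ0 hρ1
  have hcov' : cov = ρ / 4 +
      (Real.sqrt (1 - ρ ^ 2) + Real.arcsin ρ * ρ - 1) / (2 * Real.pi) := by
    rw [hcov, hI12, hI1, hI2]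
    have hss : Real.sqrt (2 * Real.pi) * Real.sqrt (2 * Real.pi) = 2 * Real.pi :=
      Real.mul_self_sqrt (by positivity)
    have hne : Real.sqrt (2 * Real.pi) ≠ 0 :=
      ne_of_gt (Real.sqrt_pos.2 (by positivity))
    have h4 : -(Real.sqrt (2 * Real.pi))⁻¹ * -(Real.sqrt (2 * Real.pi))⁻¹ =
        (2 * Real.pi)⁻¹ := by
      rw [neg_mul_neg, ← mul_inv, hss]
    rw [h4]
    have hpi := Real.pi_pos
    field_simp
    ring
  rw [hcov']
  exact Stmt16Aux.key_ineq hρ0 hρ1
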